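/- Every topological vector space (over the reals) is a κ-sequential topological space. -/

import Mathlib

open Filter Topology Set

def KappaFU (X : Type*) [TopologicalSpace X] : Prop :=
  ∀ U : Set X, IsOpen U → ∀ x ∈ closure U,
    ∃ u : ℕ → X, (∀ n, u n ∈ U) ∧ Filter.Tendsto u Filter.atTop (nhds x)

def OCA (X : Type*) [TopologicalSpace X] : Prop :=
  ∀ W : Set X, IsOpen W → ∀ z ∈ closure W,
    ∃ K : Set X, IsCompact K ∧ z ∈ K ∧ z ∈ closure (K ∩ W)

def WOCA (X : Type*) [TopologicalSpace X] : Prop :=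
  ∀ W : Set X, IsOpen W → ¬ IsClosed W →
    ∃ z ∈ closure W \ W, ∃ K : Set X, IsCompact K ∧ z ∈ K ∧ z ∈ closure (K ∩ W)

def KappaSeq (X : Type*) [TopologicalSpace X] : Prop :=
  ∀ W : Set X, IsOpen W → ¬ IsClosed W →
    ∃ z ∈ closure W \ W, ∃ u : ℕ → X, (∀ n, u n ∈ W) ∧ Filter.Tendsto u Filter.atTop (nhds z)

def KappaPseudoOpen {X Y : Type*} [TopologicalSpace X] [TopologicalSpace Y] (f : X → Y) : Prop :=
  ∀ (y : Y) (U : Set X), IsOpen U → f ⁻¹' {y} ⊆ U → y ∈ interior (closure (f '' U))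

def WeaklyKappaPseudoOpen {X Y : Type*} [TopologicalSpace X] [TopologicalSpace Y] (f : X → Y) : Prop :=
  ∀ U : Set Y, IsOpen U → (IsClosed U ↔ IsClosed (f ⁻¹' U))

theorem tvs_kappaSeq (E : Type*) [AddCommGroup E] [Module ℝ E] [TopologicalSpace E]
    [IsTopologicalAddGroup E] [ContinuousSMul ℝ E] : KappaSeq E := by
  intro W hWopen hWnotclosed
  have h1 : ¬ closure W ⊆ W := fun h =>
    hWnotclosed (closure_eq_iff_isClosed.mp (subset_antisymm h subset_closure))
  obtain ⟨z₀, hz₀c, hz₀W⟩ := not_subset.mp h1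
  have hWne : W.Nonempty := by
    rcases W.eq_empty_or_nonempty with h | h
    · exact absurd (h ▸ isClosed_empty) hWnotclosed
    · exact h
  obtain ⟨x, hx⟩ := hWne
  set g : ℝ → E := fun t => z₀ + t • (x - z₀) with hg
  have hgcont : Continuous g := by continuity
  have hg0 : g 0 = z₀ := by simp [hg]
  have hg1 : g 1 = x := by simp [hg]
  set K : Set ℝ := Icc (0:ℝ) 1 ∩ g ⁻¹' Wᶜ with hK
  have hKclosed : IsClosed K := isClosed_Icc.inter (hWopen.isClosed_compl.preimage hgcont)
  have hKne : K.Nonempty := ⟨0, ⟨le_refl 0, zero_le_one⟩, by simp [hg0, hz₀W]⟩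
  have hKbdd : BddAbove K := BddAbove.mono inter_subset_left bddAbove_Icc
  set c := sSup K with hc
  have hcK : c ∈ K := hKclosed.csSup_mem hKne hKbdd
  have hc01 : c ∈ Icc (0:ℝ) 1 := hcK.1
  have hgcW : g c ∉ W := hcK.2
  have hc1 : c < 1 := lt_of_le_of_ne hc01.2 (fun h => hgcW (by rw [h, hg1]; exact hx))
  have hmem : ∀ t ∈ Ioc c 1, g t ∈ W := by
    intro t ht
    by_contra h
    have : t ∈ K := ⟨⟨le_trans hc01.1 ht.1.le, ht.2⟩, h⟩
    exact absurd (le_csSup hKbdd this) (not_le.mpr ht.1)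
  set u : ℕ → E := fun n => g (c + (1 - c) / (n + 1)) with hu
  have hseq : ∀ n : ℕ, c + (1 - c) / ((n : ℝ) + 1) ∈ Ioc c 1 := by
    intro n
    have hpos : (0:ℝ) < (n:ℝ) + 1 := by positivity
    constructor
    · have := div_pos (by linarith : (0:ℝ) < 1 - c) hpos
      linarith
    · have h1 : (1 - c) / ((n:ℝ) + 1) ≤ 1 - c :=
        div_le_self (by linarith) (by linarith [Nat.cast_nonneg (α := ℝ) n])
      linarith
  have huW : ∀ n, u n ∈ W := fun n => hmem _ (hseq n)
  have htend : Tendsto (fun n : ℕ => c + (1 - c) / ((n : ℝ) + 1)) atTop (nhds c) := by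
    have h0 : Tendsto (fun n : ℕ => (1 - c) / ((n : ℝ) + 1)) atTop (nhds 0) :=
      tendsto_const_nhds.div_atTop (tendsto_natCast_atTop_atTop.atTop_add tendsto_const_nhds)
    have h2 := (tendsto_const_nhds (α := ℕ) (x := c)).add h0
    rwa [add_zero] at h2
  have hutend : Tendsto u atTop (nhds (g c)) := (hgcont.tendsto c).comp htend
  refine ⟨g c, ⟨?_, hgcW⟩, u, huW, hutend⟩
  exact mem_closure_of_tendsto hutend (Eventually.of_forall huW)
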